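/- Define g : (0,∞) → ℝ by g(τ) = ln(1 + ln τ) if τ ≥ 1 and g(τ) = −ln(1 − ln τ) if 0 < τ < 1. Let T > 0, let L : [0,T] → [0,∞) be continuous, and let z : [0,T] → (0,∞) be differentiable with |z'(t)| ≤ L(t)(1 + |ln z(t)|) z(t) for all t ∈ [0,T]. Then for every t ∈ [0,T], |g(z(t)) − g(z(0))| ≤ ∫₀ᵗ L(τ) dτ, and consequently Φ(z(t), z(0)) ≤ exp(∫₀ᵗ L(τ) dτ). -/

import Mathlib

open MeasureTheory Metric Real
open scoped ENNReal

noncomputable section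

/-- The comparison function `Φ`. -/
def Phi (r s : ℝ) : ℝ :=
  if 0 ≤ (1 - s) * (1 - r) then
    max ((1 + |Real.log s|) / (1 + |Real.log r|)) ((1 + |Real.log r|) / (1 + |Real.log s|))
  else (1 + |Real.log s|) * (1 + |Real.log r|)

/-- The function `g` : `g(τ) = ln(1+ln τ)` for `τ ≥ 1`, `g(τ) = -ln(1-ln τ)` for `0 < τ < 1`. -/
def gfun (τ : ℝ) : ℝ :=
  if 1 ≤ τ then Real.log (1 + Real.log τ) else -Real.log (1 - Real.log τ)

lemma gfun_of_ge {r : ℝ} (hr : 1 ≤ r) : gfun r = Real.log (1 + |Real.log r|) := by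
  rw [gfun, if_pos hr, abs_of_nonneg (Real.log_nonneg hr)]

lemma gfun_of_le {r : ℝ} (hr0 : 0 < r) (hr : r ≤ 1) :
    gfun r = -Real.log (1 + |Real.log r|) := by
  have hl : Real.log r ≤ 0 := Real.log_nonpos hr0.le hr
  rcases eq_or_lt_of_le hr with h | h
  · subst h; simp [gfun]
  · rw [gfun, if_neg (not_le.2 h), abs_of_nonpos hl]; ring_nf

lemma hfun_hasDerivAt {x : ℝ} (hx : 0 < x) (hx' : 0 < 1 + Real.log x) :
    HasDerivAt (fun τ => Real.log (1 + Real.log τ)) (1 / ((1 + Real.log x) * x)) x := by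
  have h1 : HasDerivAt (fun τ : ℝ => 1 + Real.log τ) (x⁻¹) x := by
    simpa using (Real.hasDerivAt_log hx.ne').const_add 1
  have := h1.log hx'.ne'
  convert this using 1
  field_simp

lemma kfun_hasDerivAt {x : ℝ} (hx : 0 < x) (hx' : 0 < 1 - Real.log x) :
    HasDerivAt (fun τ => -Real.log (1 - Real.log τ)) (1 / ((1 - Real.log x) * x)) x := by
  have h1 : HasDerivAt (fun τ : ℝ => 1 - Real.log τ) (-x⁻¹) x := by
    simpa using (Real.hasDerivAt_log hx.ne').const_sub 1
  have : HasDerivAt (fun τ => -Real.log (1 - Real.log τ)) (-(-x⁻¹ / (1 - Real.log x))) x := (h1.log hx'.ne').neg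
  convert this using 1
  simp only [one_div, mul_inv, neg_div, neg_neg, div_eq_mul_inv]
  ring

lemma gfun_hasDerivAt {x : ℝ} (hx : 0 < x) :
    HasDerivAt gfun (1 / ((1 + |Real.log x|) * x)) x := by
  rcases lt_trichotomy x 1 with h | h | h
  · -- x < 1
    have hl : Real.log x < 0 := Real.log_neg hx h
    have hx' : 0 < 1 - Real.log x := by linarith
    have hk := kfun_hasDerivAt hx hx'
    have heq : gfun =ᶠ[nhds x] fun τ => -Real.log (1 - Real.log τ) := by
      filter_upwards [Iio_mem_nhds h] with y hy
      rw [gfun, if_neg (not_le.2 hy)]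
    rw [abs_of_nonpos hl.le]
    have : (1 : ℝ) + -Real.log x = 1 - Real.log x := by ring
    rw [this]
    exact hk.congr_of_eventuallyEq heq
  · -- x = 1
    subst h
    have hh := hfun_hasDerivAt one_pos (by simp)
    have hk := kfun_hasDerivAt one_pos (by simp)
    simp only [Real.log_one, add_zero, sub_zero, mul_one, abs_zero] at hh hk ⊢
    rw [hasDerivAt_iff_tendsto_slope]
    have hgk : Filter.Tendsto (slope gfun 1) (nhdsWithin 1 (Set.Iio 1)) (nhds 1) := by
      have hk' : Filter.Tendsto (slope (fun τ => -Real.log (1 - Real.log τ)) 1)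
          (nhdsWithin 1 (Set.Iio 1)) (nhds 1) := by
        have := (hasDerivAt_iff_tendsto_slope.1 hk).mono_left
          (nhdsWithin_mono 1 (fun y (hy : y ∈ Set.Iio 1) => ne_of_lt hy))
        simpa using this
      refine hk'.congr' ?_
      filter_upwards [self_mem_nhdsWithin] with y hy
      simp only [slope_def_field]
      have e1 : gfun y = -Real.log (1 - Real.log y) := by rw [gfun, if_neg (not_le.2 hy)]
      have e2 : gfun 1 = 0 := by simp [gfun]
      rw [e1, e2]; simp
    have hgh : Filter.Tendsto (slope gfun 1) (nhdsWithin 1 (Set.Ioi 1)) (nhds 1) := by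
      have hh' : Filter.Tendsto (slope (fun τ => Real.log (1 + Real.log τ)) 1)
          (nhdsWithin 1 (Set.Ioi 1)) (nhds 1) := by
        have := (hasDerivAt_iff_tendsto_slope.1 hh).mono_left
          (nhdsWithin_mono 1 (fun y (hy : y ∈ Set.Ioi 1) => ne_of_gt hy))
        simpa using this
      refine hh'.congr' ?_
      filter_upwards [self_mem_nhdsWithin] with y hy
      simp only [slope_def_field]
      have e1 : gfun y = Real.log (1 + Real.log y) := by rw [gfun, if_pos hy.le]
      have e2 : gfun 1 = 0 := by simp [gfun]
      rw [e1, e2]; simp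
    have hsup : Filter.Tendsto (slope gfun 1) (nhdsWithin 1 (Set.Iio 1) ⊔ nhdsWithin 1 (Set.Ioi 1)) (nhds 1) :=
      Filter.tendsto_sup.2 ⟨hgk, hgh⟩
    rw [← nhdsLT_sup_nhdsGT (1 : ℝ)]
    simpa using hsup
  · -- 1 < x
    have hl : 0 < Real.log x := Real.log_pos h
    have hx' : 0 < 1 + Real.log x := by linarith
    have hh := hfun_hasDerivAt hx hx'
    have heq : gfun =ᶠ[nhds x] fun τ => Real.log (1 + Real.log τ) := by
      filter_upwards [Ioi_mem_nhds h] with y hy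
      rw [gfun, if_pos hy.le]
    rw [abs_of_nonneg hl.le]
    exact hh.congr_of_eventuallyEq heq

lemma phi_le_exp {r s : ℝ} (hr : 0 < r) (hs : 0 < s) :
    Phi r s ≤ Real.exp |gfun r - gfun s| := by
  set A := 1 + |Real.log r| with hA
  set B := 1 + |Real.log s| with hB
  have hA0 : (0:ℝ) < A := by positivity
  have hB0 : (0:ℝ) < B := by positivity
  have hlA : 0 ≤ Real.log A := Real.log_nonneg (by simp [hA, abs_nonneg])
  have hlB : 0 ≤ Real.log B := Real.log_nonneg (by simp [hB, abs_nonneg])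
  have hexpmax : ∀ x : ℝ, Real.exp |x| = max (Real.exp x) (Real.exp (-x)) := by
    intro x
    rw [abs_eq_max_neg, Real.exp_monotone.map_max]
  rw [Phi]
  split_ifs with hcond
  · -- same side of 1
    have hsame : |gfun r - gfun s| = |Real.log A - Real.log B| := by
      rcases mul_nonneg_iff.1 hcond with ⟨h1, h2⟩ | ⟨h1, h2⟩
      · have hs1 : s ≤ 1 := by linarith
        have hr1 : r ≤ 1 := by linarith
        rw [gfun_of_le hr hr1, gfun_of_le hs hs1, ← hA, ← hB]
        have he : -Real.log A - -Real.log B = -(Real.log A - Real.log B) := by ring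
        rw [he, abs_neg]
      · have hs1 : 1 ≤ s := by linarith
        have hr1 : 1 ≤ r := by linarith
        rw [gfun_of_ge hr1, gfun_of_ge hs1, ← hA, ← hB]
    rw [hsame, hexpmax, Real.exp_sub, neg_sub, Real.exp_sub,
      Real.exp_log hA0, Real.exp_log hB0, ← hA, ← hB]
    exact le_of_eq (max_comm _ _)
  · -- opposite sides
    push_neg at hcond
    rcases mul_neg_iff.1 hcond with ⟨h1, h2⟩ | ⟨h1, h2⟩
    · have hs1 : s ≤ 1 := by linarith
      have hr1 : 1 ≤ r := by linarith
      rw [gfun_of_ge hr1, gfun_of_le hs hs1, ← hA, ← hB, sub_neg_eq_add,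
        abs_of_nonneg (by positivity), Real.exp_add, Real.exp_log hA0, Real.exp_log hB0]
      exact le_of_eq (mul_comm B A)
    · have hs1 : 1 ≤ s := by linarith
      have hr1 : r ≤ 1 := by linarith
      rw [gfun_of_ge hs1, gfun_of_le hr hr1, ← hA, ← hB]
      have he : -Real.log A - Real.log B = -(Real.log A + Real.log B) := by ring
      rw [he, abs_neg, abs_of_nonneg (by positivity), Real.exp_add,
        Real.exp_log hA0, Real.exp_log hB0]
      exact le_of_eq (mul_comm B A)

/-- ODE comparison estimate for `g` and the resulting bound on `Φ`. -/
theorem ode_log_comparison (T : ℝ) (hT : 0 < T) (L : ℝ → ℝ)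
    (hLc : ContinuousOn L (Set.Icc 0 T)) (hLnn : ∀ t ∈ Set.Icc (0:ℝ) T, 0 ≤ L t)
    (z z' : ℝ → ℝ) (hzpos : ∀ t ∈ Set.Icc (0:ℝ) T, 0 < z t)
    (hz : ∀ t ∈ Set.Icc (0:ℝ) T, HasDerivAt z (z' t) t)
    (hode : ∀ t ∈ Set.Icc (0:ℝ) T, |z' t| ≤ L t * (1 + |Real.log (z t)|) * z t) :
    ∀ t ∈ Set.Icc (0:ℝ) T,
      (|gfun (z t) - gfun (z 0)| ≤ ∫ τ in (0:ℝ)..t, L τ) ∧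
      Phi (z t) (z 0) ≤ Real.exp (∫ τ in (0:ℝ)..t, L τ) := by
  have h0T : (0:ℝ) ∈ Set.Icc (0:ℝ) T := ⟨le_refl 0, hT.le⟩
  -- continuous extension of L
  set Lt : ℝ → ℝ := fun t => L ((Set.projIcc 0 T hT.le t : ℝ)) with hLtdef
  have hLtc : Continuous Lt := by
    apply hLc.comp_continuous (continuous_subtype_val.comp (continuous_projIcc))
    exact fun x => (Set.projIcc 0 T hT.le x).2
  have hLteq : ∀ x ∈ Set.Icc (0:ℝ) T, Lt x = L x := by
    intro x hx
    simp [hLtdef, Set.projIcc_of_mem hT.le hx]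
  -- the primitive of Lt
  set Ψ : ℝ → ℝ := fun t => ∫ τ in (0:ℝ)..t, Lt τ with hΨdef
  have hΨ : ∀ t : ℝ, HasDerivAt Ψ (Lt t) t := by
    intro t
    exact intervalIntegral.integral_hasDerivAt_right (hLtc.intervalIntegrable 0 t)
      (hLtc.stronglyMeasurableAtFilter _ _) hLtc.continuousAt
  -- derivative of gfun ∘ z
  have hG : ∀ t ∈ Set.Icc (0:ℝ) T,
      HasDerivAt (fun τ => gfun (z τ))
        ((1 / ((1 + |Real.log (z t)|) * z t)) * z' t) t := by
    intro t ht
    exact (gfun_hasDerivAt (hzpos t ht)).comp t (hz t ht)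
  have hGb : ∀ t ∈ Set.Icc (0:ℝ) T,
      |(1 / ((1 + |Real.log (z t)|) * z t)) * z' t| ≤ L t := by
    intro t ht
    have hAz : 0 < (1 + |Real.log (z t)|) * z t := by
      have := hzpos t ht; positivity
    rw [abs_mul, abs_of_nonneg (by positivity : (0:ℝ) ≤ 1 / ((1 + |Real.log (z t)|) * z t)),
      one_div, inv_mul_le_iff₀ hAz]
    calc |z' t| ≤ L t * (1 + |Real.log (z t)|) * z t := hode t ht
      _ = (1 + |Real.log (z t)|) * z t * L t := by ring
  -- monotonicity of Ψ ∓ gfun ∘ z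
  have key : ∀ (c : ℝ), (c = 1 ∨ c = -1) → MonotoneOn (fun τ => Ψ τ + c * gfun (z τ))
      (Set.Icc (0:ℝ) T) := by
    intro c hc
    apply monotoneOn_of_deriv_nonneg (convex_Icc 0 T)
    · intro t ht
      exact (((hΨ t).add (((hG t ht).const_mul c))).continuousAt).continuousWithinAt
    · intro t ht
      rw [interior_Icc] at ht
      have ht' : t ∈ Set.Icc (0:ℝ) T := Set.Ioo_subset_Icc_self ht
      exact (((hΨ t).add ((hG t ht').const_mul c)).differentiableAt).differentiableWithinAt
    · intro t ht
      rw [interior_Icc] at ht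
      have ht' : t ∈ Set.Icc (0:ℝ) T := Set.Ioo_subset_Icc_self ht
      rw [show deriv (fun τ => Ψ τ + c * gfun (z τ)) t = _ from ((hΨ t).add ((hG t ht').const_mul c)).deriv]
      have h1 : |c * ((1 / ((1 + |Real.log (z t)|) * z t)) * z' t)| ≤ L t := by
        rcases hc with h | h
        · rw [h, one_mul]; exact hGb t ht'
        · rw [h, neg_one_mul, abs_neg]; exact hGb t ht'
      have h2 : -(L t) ≤ c * ((1 / ((1 + |Real.log (z t)|) * z t)) * z' t) := (abs_le.1 h1).1
      have h3 := hLteq t ht'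
      linarith
  intro t ht
  have hut := key 1 (Or.inl rfl) h0T ht ht.1
  have hvt := key (-1) (Or.inr rfl) h0T ht ht.1
  simp only [one_mul, neg_one_mul] at hut hvt
  have hΨ0 : Ψ 0 = 0 := intervalIntegral.integral_same
  have hint : (∫ τ in (0:ℝ)..t, L τ) = Ψ t := by
    rw [hΨdef]
    apply intervalIntegral.integral_congr
    intro x hx
    rw [Set.uIcc_of_le ht.1] at hx
    exact (hLteq x ⟨hx.1, hx.2.trans ht.2⟩).symm
  have habs : |gfun (z t) - gfun (z 0)| ≤ Ψ t := by
    rw [hΨ0] at hut hvt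
    rw [abs_le]
    constructor <;> linarith
  rw [hint]
  refine ⟨habs, ?_⟩
  exact (phi_le_exp (hzpos t ht) (hzpos 0 h0T)).trans (Real.exp_le_exp.2 habs)
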